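/- Fix 0 ≤ t < T, a continuous map r : ℝ^d → ℝ^d, a continuous map q from ℝ^d to symmetric positive definite d×d matrices, and h : ℝ^d → ℝ. Let Ū : [0,T] × ℝ^d → ℝ be continuously differentiable with Ū_t(s,x) + ⟨∇_x Ū(s,x), r(x)⟩ − (1/2)⟨∇_x Ū(s,x), q(x)∇_x Ū(s,x)⟩ ≥ 0 on (0,T) × ℝ^d and Ū(T,·) ≤ h. For a continuously differentiable path φ : [t,T] → ℝ^d with φ(t) = x, write S_{tT}(φ) = (1/2)∫_t^T ⟨φ'(s) − r(φ(s)), q(φ(s))⁻¹(φ'(s) − r(φ(s)))⟩ ds. Then for every such φ, S_{tT}(φ) − ∫_t^T ⟨φ'(s) − r(φ(s)), ∇_x Ū(s,φ(s))⟩ ds − (1/2)∫_t^T ⟨∇_x Ū(s,φ(s)), q(φ(s))∇_x Ū(s,φ(s))⟩ ds + 2h(φ(T)) ≥ S_{tT}(φ) + h(φ(T)) + Ū(t,x). Consequently the infimum over all such φ of the left-hand side is at least G(t,x) + Ū(t,x), where G(t,x) = inf_{φ, φ(t)=x} [S_{tT}(φ) + h(φ(T))]. -/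

import Mathlib

open MeasureTheory intervalIntegral Matrix
open scoped RealInnerProductSpace
open Asymptotics InnerProductSpace
open scoped Topology

/-- If `F : ℝ × E → ℝ` has a time derivative and a spatial gradient everywhere,
with the gradient jointly continuous, then `F` is (jointly) Fréchet differentiable. -/
lemma joint_hasFDerivAt_aux {E : Type*} [NormedAddCommGroup E] [InnerProductSpace ℝ E]
    [CompleteSpace E]
    (F : ℝ → E → ℝ) (Ft : ℝ → E → ℝ) (Fx : ℝ → E → E)
    (hFt : ∀ s y, HasDerivAt (fun τ => F τ y) (Ft s y) s)
    (hFx : ∀ s y, HasGradientAt (fun z => F s z) (Fx s y) y)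
    (hFxc : Continuous fun p : ℝ × E => Fx p.1 p.2)
    (a : ℝ) (p : E) :
    HasFDerivAt (fun w : ℝ × E => F w.1 w.2)
      ((ContinuousLinearMap.fst ℝ ℝ E).smulRight (Ft a p)
        + (toDual ℝ E (Fx a p) : E →L[ℝ] ℝ).comp (ContinuousLinearMap.snd ℝ ℝ E)) (a, p) := by
  rw [hasFDerivAt_iff_isLittleO_nhds_zero]
  have hB : (fun w : ℝ × E => F (a + w.1) p - F a p - w.1 * Ft a p)
      =o[𝓝 0] (fun w : ℝ × E => w) := by
    have h0 := hasDerivAt_iff_isLittleO.1 (hFt a p)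
    have htend : Filter.Tendsto (fun w : ℝ × E => a + w.1) (𝓝 0) (𝓝 a) := by
      have : Filter.Tendsto (fun w : ℝ × E => w.1) (𝓝 0) (𝓝 0) := continuous_fst.tendsto' 0 0 rfl
      simpa using (this.const_add a)
    have h1 := h0.comp_tendsto htend
    simp only [Function.comp_def, add_sub_cancel_left] at h1
    have h2 : (fun w : ℝ × E => F (a + w.1) p - F a p - w.1 * Ft a p)
        =o[𝓝 0] (fun w : ℝ × E => w.1) := by
      simpa [smul_eq_mul, mul_comm] using h1
    exact h2.trans_isBigO isBigO_fst_prod'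
  have hA : (fun w : ℝ × E => F (a + w.1) (p + w.2) - F (a + w.1) p - ⟪Fx a p, w.2⟫)
      =o[𝓝 0] (fun w : ℝ × E => w) := by
    rw [isLittleO_iff]
    intro c hc
    obtain ⟨δ, hδ, hball⟩ := Metric.continuousAt_iff.1 (hFxc.continuousAt
      (x := (a, p))) c hc
    filter_upwards [Metric.ball_mem_nhds (0 : ℝ × E) hδ] with w hw
    rw [Metric.mem_ball, dist_zero_right, Prod.norm_def] at hw
    have hw1 : ‖w.1‖ < δ := lt_of_le_of_lt (le_max_left _ _) hw
    have hw2 : ‖w.2‖ < δ := lt_of_le_of_lt (le_max_right _ _) hw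
    -- mean value estimate on the ball around p
    set g : E → ℝ := fun y => F (a + w.1) y - (toDual ℝ E (Fx a p) : E →L[ℝ] ℝ) y with hg
    have hgderiv : ∀ y ∈ Metric.ball p δ, HasFDerivWithinAt g
        ((toDual ℝ E (Fx (a + w.1) y) : E →L[ℝ] ℝ) - (toDual ℝ E (Fx a p) : E →L[ℝ] ℝ))
        (Metric.ball p δ) y := by
      intro y _
      exact (((hFx (a + w.1) y).hasFDerivAt).sub
        ((toDual ℝ E (Fx a p) : E →L[ℝ] ℝ).hasFDerivAt)).hasFDerivWithinAt
    have hgbound : ∀ y ∈ Metric.ball p δ,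
        ‖(toDual ℝ E (Fx (a + w.1) y) : E →L[ℝ] ℝ) - (toDual ℝ E (Fx a p) : E →L[ℝ] ℝ)‖ ≤ c := by
      intro y hy
      have : dist ((a + w.1, y) : ℝ × E) (a, p) < δ := by
        rw [Prod.dist_eq]
        refine max_lt ?_ ?_
        · simpa [dist_eq_norm] using hw1
        · simpa [dist_eq_norm] using Metric.mem_ball.1 hy
      have hlt := hball this
      rw [← (toDual ℝ E).map_sub]
      calc ‖(toDual ℝ E (Fx (a + w.1) y - Fx a p) : E →L[ℝ] ℝ)‖
          = ‖Fx (a + w.1) y - Fx a p‖ := (toDual ℝ E).norm_map _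
        _ ≤ c := by
            have := hlt
            rw [dist_eq_norm] at this
            exact this.le
    have hpball : p ∈ Metric.ball p δ := Metric.mem_ball_self hδ
    have hpwball : p + w.2 ∈ Metric.ball p δ := by
      rw [Metric.mem_ball, dist_eq_norm, add_sub_cancel_left]
      exact hw2
    have key := (convex_ball p δ).norm_image_sub_le_of_norm_hasFDerivWithin_le
      hgderiv hgbound hpball hpwball
    have hgdiff : g (p + w.2) - g p
        = F (a + w.1) (p + w.2) - F (a + w.1) p - ⟪Fx a p, w.2⟫ := by
      simp only [hg, toDual_apply_apply, inner_add_right]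
      ring
    rw [hgdiff] at key
    calc ‖F (a + w.1) (p + w.2) - F (a + w.1) p - ⟪Fx a p, w.2⟫‖
        ≤ c * ‖p + w.2 - p‖ := key
      _ = c * ‖w.2‖ := by rw [add_sub_cancel_left]
      _ ≤ c * ‖w‖ := by
          apply mul_le_mul_of_nonneg_left _ hc.le
          rw [Prod.norm_def]; exact le_max_right _ _
  have := hA.add hB
  apply this.congr' _ (by rfl)
  filter_upwards with w
  simp only [ContinuousLinearMap.add_apply, ContinuousLinearMap.smulRight_apply,
    ContinuousLinearMap.coe_fst', ContinuousLinearMap.comp_apply,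
    ContinuousLinearMap.coe_snd', toDual_apply_apply, Prod.fst_add, Prod.snd_add, smul_eq_mul]
  ring_nf

/-- The deterministic limit variational estimate: for a classical subsolution `Ū`,
along every C¹ path `φ` with `φ(t) = x`,
`S(φ) − ∫⟨φ'−r, ∇Ū⟩ − (1/2)∫⟨∇Ū, q∇Ū⟩ + 2h(φ(T)) ≥ S(φ) + h(φ(T)) + Ū(t,x)`,
whence the infimum of the left-hand side is at least `G(t,x) + Ū(t,x)`. -/
theorem importance_sampling_variational_bound
    (d : ℕ) (t T : ℝ) (ht : 0 ≤ t) (htT : t < T)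
    (r : EuclideanSpace ℝ (Fin d) → EuclideanSpace ℝ (Fin d)) (hr : Continuous r)
    (q : EuclideanSpace ℝ (Fin d) → Matrix (Fin d) (Fin d) ℝ)
    (hq : Continuous q) (hqpos : ∀ x, (q x).PosDef)
    (h : EuclideanSpace ℝ (Fin d) → ℝ)
    (Ubar : ℝ → EuclideanSpace ℝ (Fin d) → ℝ)
    (Ut : ℝ → EuclideanSpace ℝ (Fin d) → ℝ)
    (Ux : ℝ → EuclideanSpace ℝ (Fin d) → EuclideanSpace ℝ (Fin d))
    (hUt : ∀ s x, HasDerivAt (fun τ => Ubar τ x) (Ut s x) s)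
    (hUx : ∀ s x, HasGradientAt (fun y => Ubar s y) (Ux s x) x)
    (hUtc : Continuous fun p : ℝ × EuclideanSpace ℝ (Fin d) => Ut p.1 p.2)
    (hUxc : Continuous fun p : ℝ × EuclideanSpace ℝ (Fin d) => Ux p.1 p.2)
    (hsub : ∀ s ∈ Set.Ioo (0 : ℝ) T, ∀ x,
      Ut s x + ⟪Ux s x, r x⟫
        - (1 / 2) * ⟪Ux s x, Matrix.toEuclideanLin (q x) (Ux s x)⟫ ≥ 0)
    (hterm : ∀ x, Ubar T x ≤ h x)
    (x : EuclideanSpace ℝ (Fin d))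
    -- the action functional S
    (S : (ℝ → EuclideanSpace ℝ (Fin d)) → (ℝ → EuclideanSpace ℝ (Fin d)) → ℝ)
    (hS : ∀ φ φ', S φ φ' = (1 / 2) * ∫ s in t..T,
        ⟪φ' s - r (φ s), Matrix.toEuclideanLin ((q (φ s))⁻¹) (φ' s - r (φ s))⟫) :
    (∀ φ φ' : ℝ → EuclideanSpace ℝ (Fin d),
      (∀ s ∈ Set.Icc t T, HasDerivAt φ (φ' s) s) →
      ContinuousOn φ' (Set.Icc t T) → φ t = x →
      S φ φ' - (∫ s in t..T, ⟪φ' s - r (φ s), Ux s (φ s)⟫)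
          - (1 / 2) * (∫ s in t..T,
              ⟪Ux s (φ s), Matrix.toEuclideanLin (q (φ s)) (Ux s (φ s))⟫)
          + 2 * h (φ T)
        ≥ S φ φ' + h (φ T) + Ubar t x) ∧
    (∀ gL gG : ℝ,
      IsGLB {v : ℝ | ∃ φ φ' : ℝ → EuclideanSpace ℝ (Fin d),
          (∀ s ∈ Set.Icc t T, HasDerivAt φ (φ' s) s) ∧
          ContinuousOn φ' (Set.Icc t T) ∧ φ t = x ∧
          v = S φ φ' - (∫ s in t..T, ⟪φ' s - r (φ s), Ux s (φ s)⟫)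
              - (1 / 2) * (∫ s in t..T,
                  ⟪Ux s (φ s), Matrix.toEuclideanLin (q (φ s)) (Ux s (φ s))⟫)
              + 2 * h (φ T)} gL →
      IsGLB {v : ℝ | ∃ φ φ' : ℝ → EuclideanSpace ℝ (Fin d),
          (∀ s ∈ Set.Icc t T, HasDerivAt φ (φ' s) s) ∧
          ContinuousOn φ' (Set.Icc t T) ∧ φ t = x ∧
          v = S φ φ' + h (φ T)} gG →
      gL ≥ gG + Ubar t x) := by
  classical
  have main : ∀ φ φ' : ℝ → EuclideanSpace ℝ (Fin d),
      (∀ s ∈ Set.Icc t T, HasDerivAt φ (φ' s) s) →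
      ContinuousOn φ' (Set.Icc t T) → φ t = x →
      S φ φ' - (∫ s in t..T, ⟪φ' s - r (φ s), Ux s (φ s)⟫)
          - (1 / 2) * (∫ s in t..T,
              ⟪Ux s (φ s), Matrix.toEuclideanLin (q (φ s)) (Ux s (φ s))⟫)
          + 2 * h (φ T)
        ≥ S φ φ' + h (φ T) + Ubar t x := by
    intro φ φ' hφ hφ'c hφt
    have hφc : ContinuousOn φ (Set.Icc t T) := fun s hs =>
      (hφ s hs).continuousAt.continuousWithinAt
    have hpair : ContinuousOn (fun s : ℝ => ((s : ℝ), φ s)) (Set.Icc t T) :=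
      (continuousOn_id.prodMk hφc)
    have hUxφ : ContinuousOn (fun s => Ux s (φ s)) (Set.Icc t T) :=
      hUxc.comp_continuousOn hpair
    have hUtφ : ContinuousOn (fun s => Ut s (φ s)) (Set.Icc t T) :=
      hUtc.comp_continuousOn hpair
    have hrφ : ContinuousOn (fun s => r (φ s)) (Set.Icc t T) := hr.comp_continuousOn hφc
    have hqφ : ContinuousOn (fun s => q (φ s)) (Set.Icc t T) := hq.comp_continuousOn hφc
    -- the three integrands
    set g' : ℝ → ℝ := fun s => Ut s (φ s) + ⟪Ux s (φ s), φ' s⟫ with hg'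
    set i1 : ℝ → ℝ := fun s => ⟪φ' s - r (φ s), Ux s (φ s)⟫ with hi1
    set i2 : ℝ → ℝ := fun s =>
      ⟪Ux s (φ s), Matrix.toEuclideanLin (q (φ s)) (Ux s (φ s))⟫ with hi2
    set f : ℝ → ℝ := fun s => Ut s (φ s) + ⟪Ux s (φ s), r (φ s)⟫ - (1 / 2) * i2 s with hf
    -- continuity of i2
    have hi2eq : ∀ s, i2 s = ∑ i, (Ux s (φ s)) i * ∑ j, (q (φ s)) i j * (Ux s (φ s)) j := by
      intro s
      simp [hi2, PiLp.inner_apply, RCLike.inner_apply, Matrix.toEuclideanLin_apply,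
        Matrix.mulVec, dotProduct, mul_comm]
    have hi2c : ContinuousOn i2 (Set.Icc t T) := by
      rw [show i2 = fun s => ∑ i, (Ux s (φ s)) i * ∑ j, (q (φ s)) i j * (Ux s (φ s)) j from
        funext hi2eq]
      apply continuousOn_finset_sum
      intro i _
      refine ContinuousOn.mul ?_ (continuousOn_finset_sum _ fun j _ => ContinuousOn.mul ?_ ?_)
      · exact (EuclideanSpace.proj i : EuclideanSpace ℝ (Fin d) →L[ℝ] ℝ
          ).continuous.comp_continuousOn hUxφ
      · exact (((continuous_apply j).comp (continuous_apply i)).comp_continuousOn hqφ)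
      · exact (EuclideanSpace.proj j : EuclideanSpace ℝ (Fin d) →L[ℝ] ℝ
          ).continuous.comp_continuousOn hUxφ
    have hg'c : ContinuousOn g' (Set.Icc t T) := hUtφ.add (hUxφ.inner hφ'c)
    have hi1c : ContinuousOn i1 (Set.Icc t T) := (hφ'c.sub hrφ).inner hUxφ
    have hfc : ContinuousOn f (Set.Icc t T) :=
      (hUtφ.add (hUxφ.inner hrφ)).sub (continuousOn_const.mul hi2c)
    have hg'int : IntervalIntegrable g' volume t T := hg'c.intervalIntegrable_of_Icc htT.le
    have hi1int : IntervalIntegrable i1 volume t T := hi1c.intervalIntegrable_of_Icc htT.le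
    have hi2int : IntervalIntegrable i2 volume t T := hi2c.intervalIntegrable_of_Icc htT.le
    -- chain rule
    have hchain : ∀ s ∈ Set.Icc t T, HasDerivAt (fun u => Ubar u (φ u)) (g' s) s := by
      intro s hs
      have hF := joint_hasFDerivAt_aux Ubar Ut Ux hUt hUx hUxc s (φ s)
      have hpath : HasDerivAt (fun u : ℝ => ((u : ℝ), φ u)) ((1 : ℝ), φ' s) s :=
        (hasDerivAt_id s).prodMk (hφ s hs)
      have hcomp := hF.comp_hasDerivAt s hpath
      simpa [hg', Function.comp_def, InnerProductSpace.toDual_apply_apply] using hcomp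
    -- FTC
    have hFTC : ∫ s in t..T, g' s = Ubar T (φ T) - Ubar t x := by
      rw [← hφt]
      exact intervalIntegral.integral_eq_sub_of_hasDerivAt
        (fun s hs => hchain s (by rwa [Set.uIcc_of_le htT.le] at hs)) hg'int
    -- nonnegativity of ∫ f
    have hnull : ∀ᵐ s : ℝ, s ∉ ({t, T} : Set ℝ) := by
      have h0 : (volume : Measure ℝ) {t, T} = 0 :=
        (Set.toFinite ({t, T} : Set ℝ)).measure_zero _
      exact measure_eq_zero_iff_ae_notMem.1 h0
    have hfnn : (0 : ℝ) ≤ ∫ s in t..T, f s := by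
      apply intervalIntegral.integral_nonneg_of_ae_restrict htT.le
      rw [Filter.EventuallyLE, ae_restrict_iff' measurableSet_Icc]
      filter_upwards [hnull] with s hsnot hsin
      have hst : s ≠ t := fun hst => hsnot (by simp [hst])
      have hsT : s ≠ T := fun hsT => hsnot (by simp [hsT])
      have hs0 : s ∈ Set.Ioo (0 : ℝ) T :=
        ⟨lt_of_le_of_lt ht (lt_of_le_of_ne hsin.1 (Ne.symm hst)), lt_of_le_of_ne hsin.2 hsT⟩
      exact hsub s hs0 (φ s)
    -- split the integral
    have hfeq : f = fun s => g' s - i1 s - (1 / 2) * i2 s := by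
      funext s
      simp only [hf, hg', hi1, hi2, inner_sub_left]
      rw [real_inner_comm (φ' s) (Ux s (φ s)), real_inner_comm (r (φ s)) (Ux s (φ s))]
      ring
    have hsplit : ∫ s in t..T, f s
        = (∫ s in t..T, g' s) - (∫ s in t..T, i1 s) - (1 / 2) * ∫ s in t..T, i2 s := by
      rw [hfeq]
      rw [intervalIntegral.integral_sub (hg'int.sub hi1int) (hi2int.const_mul _),
        intervalIntegral.integral_sub hg'int hi1int,
        intervalIntegral.integral_const_mul]
    have hub : Ubar T (φ T) ≤ h (φ T) := hterm (φ T)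
    rw [hsplit, hFTC] at hfnn
    have := hS φ φ'
    linarith
  refine ⟨main, ?_⟩
  intro gL gG hgL hgG
  have hlb : gG + Ubar t x ∈ lowerBounds
      {v : ℝ | ∃ φ φ' : ℝ → EuclideanSpace ℝ (Fin d),
        (∀ s ∈ Set.Icc t T, HasDerivAt φ (φ' s) s) ∧
        ContinuousOn φ' (Set.Icc t T) ∧ φ t = x ∧
        v = S φ φ' - (∫ s in t..T, ⟪φ' s - r (φ s), Ux s (φ s)⟫)
            - (1 / 2) * (∫ s in t..T,
                ⟪Ux s (φ s), Matrix.toEuclideanLin (q (φ s)) (Ux s (φ s))⟫)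
            + 2 * h (φ T)} := by
    rintro v ⟨φ, φ', h1, h2, h3, rfl⟩
    have hge := main φ φ' h1 h2 h3
    have hmem : S φ φ' + h (φ T) ∈ {v : ℝ | ∃ φ φ' : ℝ → EuclideanSpace ℝ (Fin d),
        (∀ s ∈ Set.Icc t T, HasDerivAt φ (φ' s) s) ∧
        ContinuousOn φ' (Set.Icc t T) ∧ φ t = x ∧
        v = S φ φ' + h (φ T)} := ⟨φ, φ', h1, h2, h3, rfl⟩
    have := hgG.1 hmem
    linarith
  exact hgL.2 hlb
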